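/- Let K be a field, G and H groups, and suppose the group algebra K[G] is a domain. If Frac(K[G]) denotes its field of fractions and M is a bi-ordered group, and Frac(K[G]) is a linearly ordered field, then the group algebra Frac(K[G])[M] is a linearly ordered ring (in particular a domain). -/

import Mathlib

namespace FGAux

variable {F M : Type*} [Semiring F] [Group M] [LinearOrder M]

open Classical in
/-- top element of the support, or 1 for the zero element -/
noncomputable def mtop (f : MonoidAlgebra F M) : M :=
  if h : f = 0 then 1 else f.coeff.support.max' (Finsupp.support_nonempty_iff.mpr (mt MonoidAlgebra.coeff_eq_zero.mp h))

lemma mtop_mem {f : MonoidAlgebra F M} (hf : f ≠ 0) : mtop f ∈ f.coeff.support := by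
  unfold mtop
  rw [dif_neg hf]
  exact Finset.max'_mem _ _

lemma coeff_mtop_ne_zero {f : MonoidAlgebra F M} (hf : f ≠ 0) : f.coeff (mtop f) ≠ 0 :=
  Finsupp.mem_support_iff.mp (mtop_mem hf)

lemma le_mtop {f : MonoidAlgebra F M} {a : M} (ha : a ∈ f.coeff.support) : a ≤ mtop f := by
  have hf : f ≠ 0 := by
    rintro rfl
    simp at ha
  unfold mtop
  rw [dif_neg hf]
  exact Finset.le_max' _ _ ha

lemma mtop_eq {f : MonoidAlgebra F M} {a : M} (ha : f.coeff a ≠ 0)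
    (h : ∀ b ∈ f.coeff.support, b ≤ a) : mtop f = a := by
  have hf : f ≠ 0 := fun h0 => ha (by rw [h0]; rfl)
  exact le_antisymm (h _ (mtop_mem hf)) (le_mtop (Finsupp.mem_support_iff.mpr ha))

lemma mtop_neg {F : Type*} [Ring F] (f : MonoidAlgebra F M) : mtop (-f) = mtop f := by
  have hsupport : (-f).coeff.support = f.coeff.support := by
    ext a
    simp only [Finsupp.mem_support_iff]
    rw [show (-f).coeff a = -(f.coeff a) from rfl]
    exact not_congr neg_eq_zero
  rcases eq_or_ne f 0 with rfl | h
  · rw [neg_zero]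
  · unfold mtop
    rw [dif_neg h, dif_neg (neg_ne_zero.mpr h)]
    simp only [hsupport]

variable (hM : ∀ a b x y : M, x < y → a * x * b < a * y * b)

include hM in
lemma coeff_mul_mtop {f g : MonoidAlgebra F M} (hf : f ≠ 0) (hg : g ≠ 0) :
    (f * g).coeff (mtop f * mtop g) = f.coeff (mtop f) * g.coeff (mtop g) := by
  classical
  rw [MonoidAlgebra.coeff_mul]
  simp_rw [Finsupp.sum]
  rw [Finset.sum_eq_single (mtop f)]
  · rw [Finset.sum_eq_single (mtop g), if_pos rfl]
    · intro a ha hne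
      refine if_neg fun he => ?_
      have h1 : a < mtop g := lt_of_le_of_ne (le_mtop ha) hne
      have h2 := hM (mtop f) 1 a (mtop g) h1
      simp only [mul_one] at h2
      exact absurd he (ne_of_lt h2)
    · intro h
      exact absurd (mtop_mem hg) h
  · intro a ha hne
    refine Finset.sum_eq_zero fun b hb => if_neg fun he => ?_
    have h1 : a < mtop f := lt_of_le_of_ne (le_mtop ha) hne
    have h2 : a * b < mtop f * b := by simpa using hM 1 b a (mtop f) h1
    have h3 : mtop f * b ≤ mtop f * mtop g := by
      rcases eq_or_lt_of_le (le_mtop hb) with h | h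
      · rw [h]
      · exact le_of_lt (by simpa using hM (mtop f) 1 b (mtop g) h)
    exact absurd he (ne_of_lt (lt_of_lt_of_le h2 h3))
  · intro h
    exact absurd (mtop_mem hf) h

include hM in
lemma mem_support_mul_le {f g : MonoidAlgebra F M} {a : M} (ha : a ∈ (f * g).coeff.support) :
    a ≤ mtop f * mtop g := by
  classical
  obtain ⟨i, hi, j, hj, rfl⟩ := Finset.mem_mul.mp (MonoidAlgebra.support_coeff_mul_subset f g ha)
  have h1 : i * j ≤ mtop f * j := by
    rcases eq_or_lt_of_le (le_mtop hi) with h | h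
    · rw [h]
    · exact le_of_lt (by simpa using hM 1 j i (mtop f) h)
  have h2 : mtop f * j ≤ mtop f * mtop g := by
    rcases eq_or_lt_of_le (le_mtop hj) with h | h
    · rw [h]
    · exact le_of_lt (by simpa using hM (mtop f) 1 j (mtop g) h)
  exact h1.trans h2

include hM in
lemma mtop_mul {F : Type*} [Semiring F] [NoZeroDivisors F] {f g : MonoidAlgebra F M}
    (hf : f ≠ 0) (hg : g ≠ 0) : mtop (f * g) = mtop f * mtop g := by
  refine mtop_eq ?_ fun b hb => mem_support_mul_le hM hb
  rw [coeff_mul_mtop hM hf hg]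
  exact mul_ne_zero (coeff_mtop_ne_zero hf) (coeff_mtop_ne_zero hg)

include hM in
lemma mul_ne_zero' {F : Type*} [Semiring F] [NoZeroDivisors F] {f g : MonoidAlgebra F M}
    (hf : f ≠ 0) (hg : g ≠ 0) : f * g ≠ 0 := by
  intro h0
  have := coeff_mul_mtop hM hf hg
  rw [h0] at this
  exact mul_ne_zero (coeff_mtop_ne_zero hf) (coeff_mtop_ne_zero hg) this.symm

end FGAux

open FGAux in
theorem FGAux.ordered_ring_aux {F M : Type*} [Field F] [Group M] [LinearOrder M]
    [LinearOrder F]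
    (hM : ∀ a b x y : M, x < y → a * x * b < a * y * b)
    (haddF : ∀ x y z : F, x < y → x + z < y + z)
    (hmulF : ∀ a x y : F, 0 < a → x < y → a * x < a * y) :
    ∃ lo : LinearOrder (MonoidAlgebra F M),
      (∀ x y z, lo.lt x y → lo.lt (x + z) (y + z)) ∧
      (∀ a x y, lo.lt 0 a → lo.lt x y → lo.lt (a * x) (a * y) ∧ lo.lt (x * a) (y * a)) ∧
      (∀ f g : MonoidAlgebra F M, f ≠ 0 → g ≠ 0 → f * g ≠ 0) := by
  classical
  -- basic order facts about F
  have hneg : ∀ c : F, c < 0 → 0 < -c := fun c h => by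
    have := haddF c 0 (-c) h; simpa using this
  have hneg' : ∀ c : F, 0 < -c → c < 0 := fun c h => by
    have := haddF 0 (-c) c h; simpa using this
  have hposadd : ∀ a b : F, 0 < a → 0 < b → 0 < a + b := fun a b ha hb => by
    have := haddF 0 a b ha; simp only [zero_add] at this; exact lt_trans hb this
  have hposmul : ∀ a b : F, 0 < a → 0 < b → 0 < a * b := fun a b ha hb => by
    have := hmulF a 0 b ha hb; simpa using this
  have honepos : (0 : F) < 1 := by
    rcases lt_trichotomy (0 : F) 1 with h | h | h
    · exact h
    · exact absurd h.symm one_ne_zero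
    · exfalso
      have h2 : (0 : F) < -1 := hneg 1 h
      have h3 := hmulF (-1) 1 0 h2 h
      simp only [mul_one, mul_zero] at h3
      exact lt_asymm h2 h3
  -- zero applied
  have hzap : ∀ a : M, (0 : MonoidAlgebra F M).coeff a = 0 := fun _ => rfl
  have hnonzero : ∀ f : MonoidAlgebra F M, 0 < f.coeff (mtop f) → f ≠ 0 := by
    rintro f hf rfl
    rw [hzap] at hf
    exact lt_irrefl _ hf
  -- no zero divisors
  have hnzd : ∀ f g : MonoidAlgebra F M, f ≠ 0 → g ≠ 0 → f * g ≠ 0 := fun f g hf hg =>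
    FGAux.mul_ne_zero' hM hf hg
  -- support of sums
  have haddap : ∀ (f g : MonoidAlgebra F M) (a : M), (f + g).coeff a = f.coeff a + g.coeff a := fun _ _ _ => rfl
  have hsupadd : ∀ (f g : MonoidAlgebra F M) (b : M), b ∈ (f + g).coeff.support → b ≤ mtop f ∨ b ≤ mtop g := by
    intro f g b hb
    rw [Finsupp.mem_support_iff, haddap] at hb
    by_cases h : f.coeff b = 0
    · right
      apply le_mtop
      rw [Finsupp.mem_support_iff]
      intro h2
      rw [h, h2, add_zero] at hb
      exact hb rfl
    · exact Or.inl (le_mtop (Finsupp.mem_support_iff.mpr h))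
  -- positivity of leading coeff behaves well under + (dominant case)
  have hmain : ∀ f g : MonoidAlgebra F M, 0 < g.coeff (mtop g) → mtop f < mtop g → 0 < (f + g).coeff (mtop (f + g)) := by
    intro f g hg hlt
    have h1 : f.coeff (mtop g) = 0 := by
      by_contra h
      exact absurd (le_mtop (Finsupp.mem_support_iff.mpr h)) (not_le.mpr hlt)
    have h2 : (f + g).coeff (mtop g) = g.coeff (mtop g) := by rw [haddap, h1, zero_add]
    have h3 : mtop (f + g) = mtop g := by
      apply mtop_eq (by rw [h2]; exact ne_of_gt hg)
      intro b hb
      rcases hsupadd f g b hb with h | h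
      · exact le_of_lt (lt_of_le_of_lt h hlt)
      · exact h
    rw [h3, h2]
    exact hg
  have haddpos : ∀ f g : MonoidAlgebra F M, 0 < f.coeff (mtop f) → 0 < g.coeff (mtop g) → 0 < (f + g).coeff (mtop (f + g)) := by
    intro f g hf hg
    rcases lt_trichotomy (mtop f) (mtop g) with hlt | heq | hlt
    · exact hmain f g hg hlt
    · have h2 : (f + g).coeff (mtop f) = f.coeff (mtop f) + g.coeff (mtop g) := by rw [haddap, heq]
      have hpos : 0 < (f + g).coeff (mtop f) := by rw [h2]; exact hposadd _ _ hf hg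
      have h3 : mtop (f + g) = mtop f := by
        apply mtop_eq (ne_of_gt hpos)
        intro b hb
        rcases hsupadd f g b hb with h | h
        · exact h
        · rw [heq]; exact h
      rw [h3]
      exact hpos
    · rw [add_comm]
      exact hmain g f hf hlt
  have hmulpos : ∀ f g : MonoidAlgebra F M, 0 < f.coeff (mtop f) → 0 < g.coeff (mtop g) → 0 < (f * g).coeff (mtop (f * g)) := by
    intro f g hf hg
    have hf0 := hnonzero f hf
    have hg0 := hnonzero g hg
    rw [FGAux.mtop_mul hM hf0 hg0, coeff_mul_mtop hM hf0 hg0]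
    exact hposmul _ _ hf hg
  have hnegap : ∀ (f : MonoidAlgebra F M) (a : M), (-f).coeff a = -(f.coeff a) := fun _ _ => rfl
  -- the cone
  let C : RingCone (MonoidAlgebra F M) :=
    { carrier := {f : MonoidAlgebra F M | f = 0 ∨ 0 < f.coeff (mtop f)}
      zero_mem' := Or.inl rfl
      add_mem' := by
        rintro a b (rfl | ha) hb
        · rwa [zero_add]
        rcases hb with rfl | hb
        · rw [add_zero]; exact Or.inr ha
        · exact Or.inr (haddpos _ _ ha hb)
      one_mem' := by
        right
        have h1 : (1 : MonoidAlgebra F M).coeff (1 : M) = 1 := by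
          rw [MonoidAlgebra.one_def]
          exact Finsupp.single_eq_same
        have h2 : mtop (1 : MonoidAlgebra F M) = 1 := by
          apply mtop_eq (by rw [h1]; exact one_ne_zero)
          intro b hb
          rw [MonoidAlgebra.one_def] at hb
          have := Finsupp.support_single_subset hb
          rw [Finset.mem_singleton] at this
          exact this.le
        rw [h2, h1]
        exact honepos
      mul_mem' := by
        rintro a b (rfl | ha) hb
        · rw [zero_mul]; exact Or.inl rfl
        rcases hb with rfl | hb
        · rw [mul_zero]; exact Or.inl rfl
        · exact Or.inr (hmulpos _ _ ha hb)
      eq_zero_of_mem_of_neg_mem' := by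
        rintro a (rfl | ha) hb
        · rfl
        rcases hb with hb | hb
        · exact neg_eq_zero.mp hb
        · rw [mtop_neg, hnegap] at hb
          exact absurd ha (lt_asymm (hneg' _ hb)) }
  haveI : HasMemOrNegMem C := by
    constructor
    intro a
    rcases eq_or_ne a 0 with rfl | h
    · exact Or.inl (Or.inl rfl)
    rcases lt_trichotomy (0 : F) (a.coeff (mtop a)) with hp | hp | hp
    · exact Or.inl (Or.inr hp)
    · exact absurd hp.symm (coeff_mtop_ne_zero h)
    · refine Or.inr (Or.inr ?_)
      rw [mtop_neg, hnegap]
      exact hneg _ hp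
  haveI : NoZeroDivisors (MonoidAlgebra F M) := ⟨fun {a b} hab => by
    by_contra h
    push_neg at h
    exact hnzd a b h.1 h.2 hab⟩
  haveI : IsDomain (MonoidAlgebra F M) := NoZeroDivisors.to_isDomain _
  letI lor : LinearOrder (MonoidAlgebra F M) := LinearOrder.mkOfAddGroupCone C
  haveI : IsOrderedRing (MonoidAlgebra F M) := IsOrderedRing.mkOfCone C
  refine ⟨lor, fun x y z h => ?_, fun a x y ha h => ⟨?_, ?_⟩, hnzd⟩
  · exact add_lt_add_left h z
  · exact mul_lt_mul_of_pos_left h ha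
  · exact mul_lt_mul_of_pos_right h ha

theorem frac_group_algebra_ordered_ring (K G M : Type*) [Field K] [CommGroup G] [Group M]
    [IsDomain (MonoidAlgebra K G)]
    [LinearOrder M] (hM : ∀ a b x y : M, x < y → a * x * b < a * y * b)
    (loF : LinearOrder (FractionRing (MonoidAlgebra K G)))
    (haddF : ∀ x y z : FractionRing (MonoidAlgebra K G), loF.lt x y → loF.lt (x + z) (y + z))
    (hmulF : ∀ a x y : FractionRing (MonoidAlgebra K G),
      loF.lt 0 a → loF.lt x y → loF.lt (a * x) (a * y)) :
    ∃ lo : LinearOrder (MonoidAlgebra (FractionRing (MonoidAlgebra K G)) M),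
      (∀ x y z, lo.lt x y → lo.lt (x + z) (y + z)) ∧
      (∀ a x y, lo.lt 0 a → lo.lt x y → lo.lt (a * x) (a * y) ∧ lo.lt (x * a) (y * a)) ∧
      (∀ f g : MonoidAlgebra (FractionRing (MonoidAlgebra K G)) M,
        f ≠ 0 → g ≠ 0 → f * g ≠ 0) := by
  letI := loF
  exact FGAux.ordered_ring_aux hM haddF hmulF
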